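/- Let (x_i) be a finite sequence of points in a metric space such that among any N+1 consecutive points there are two at distance ≥ δ, and let f be a function with f(x_{i+1}) < f(x_i) for all i, f ≥ 0, and f(x_j) − f(x_ℓ) ≥ v > 0 whenever j < ℓ and d(x_j, x_ℓ) ≥ δ. Then the length of the sequence satisfies i ≤ N·(f(x_0)/v + 1) for any valid index i. -/
import Mathlib


/-- Abstract termination bound for the surgered flow: if along a sequence
`x₀, x₁, …` the function `f ≥ 0` strictly decreases, among any `N+1` consecutive
points two are `δ`-separated, and `f` drops by at least `v > 0` across any
`δ`-separated pair, then any valid index `i` satisfies `i ≤ N·(f(x₀)/v + 1)`. -/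
theorem surgered_flow_termination {X : Type*} [MetricSpace X]
    (x : ℕ → X) (f : X → ℝ) (N : ℕ) (hN : 0 < N) (δ v : ℝ) (hδ : 0 < δ)
    (hv : 0 < v) (i : ℕ)
    (hdec : ∀ j < i, f (x (j + 1)) < f (x j))
    (hnonneg : ∀ j ≤ i, 0 ≤ f (x j))
    (hconsec : ∀ j : ℕ, j + N ≤ i →
      ∃ a b : ℕ, j ≤ a ∧ a < b ∧ b ≤ j + N ∧ δ ≤ dist (x a) (x b))
    (hdrop : ∀ j ℓ : ℕ, j < ℓ → ℓ ≤ i → δ ≤ dist (x j) (x ℓ) →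
      v ≤ f (x j) - f (x ℓ)) :
    (i : ℝ) ≤ N * (f (x 0) / v + 1) := by
  -- monotonicity of f along the sequence
  have mono : ∀ b ≤ i, ∀ a ≤ b, f (x b) ≤ f (x a) := by
    intro b hb
    induction b with
    | zero => intro a ha; simp [Nat.le_zero.mp ha]
    | succ n ih =>
      intro a ha
      rcases Nat.eq_or_lt_of_le ha with h | h
      · simp [h]
      · have h1 : f (x (n + 1)) < f (x n) := hdec n (Nat.lt_of_lt_of_le (Nat.lt_succ_self n) hb)
        exact le_trans h1.le (ih (Nat.le_of_succ_le hb) a (Nat.lt_succ_iff.mp h))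
  -- each full block drops by v
  have block : ∀ m : ℕ, (m + 1) * N ≤ i →
      v ≤ f (x (m * N)) - f (x ((m + 1) * N)) := by
    intro m hm
    have hj : m * N + N ≤ i := by
      calc m * N + N = (m + 1) * N := by ring
        _ ≤ i := hm
    obtain ⟨a, b, hab1, hab2, hab3, hsep⟩ := hconsec (m * N) hj
    have hbi : b ≤ i := le_trans hab3 hj
    have hd := hdrop a b hab2 hbi hsep
    have h1 : f (x a) ≤ f (x (m * N)) := mono a (le_trans hab2.le hbi) (m * N) hab1
    have h2 : f (x ((m + 1) * N)) ≤ f (x b) := by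
      apply mono ((m + 1) * N) hm b
      calc b ≤ m * N + N := hab3
        _ = (m + 1) * N := by ring
    linarith
  -- accumulate drops
  have accum : ∀ k : ℕ, k * N ≤ i → (k : ℝ) * v ≤ f (x 0) - f (x (k * N)) := by
    intro k
    induction k with
    | zero => intro _; simp
    | succ k ih =>
      intro hk
      have hk' : k * N ≤ i := le_trans (by nlinarith) hk
      have h1 := ih hk'
      have h2 := block k hk
      push_cast
      linarith
  set k := i / N with hk
  have hkN : k * N ≤ i := Nat.div_mul_le_self i N
  have h1 := accum k hkN
  have h2 := hnonneg (k * N) hkN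
  have hkle : (k : ℝ) ≤ f (x 0) / v := by
    rw [le_div_iff₀ hv]; linarith
  have hi : i < (k + 1) * N := by
    rw [hk, add_mul, one_mul]
    exact Nat.lt_div_mul_add hN
  have hcast : (i : ℝ) < ((k : ℝ) + 1) * (N : ℝ) := by
    exact_mod_cast Nat.cast_lt.mpr hi
  have hNpos : (0 : ℝ) < (N : ℝ) := by exact_mod_cast hN
  nlinarith
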